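/- Let $k_1, k_2, k_3 : \mathbb{R}^3 \to \mathbb{R}$ be differentiable functions with $k_1 + k_2 + k_3 = 1$ identically and $\partial_1 k_1 = \partial_2 k_2 = \partial_3 k_3 = 0$ identically. Then there exist functions $f_1, f_2, f_3$ of one real variable such that $k_1(x) = \frac{1}{3} + f_2(x^2) - f_3(x^3)$, $k_2(x) = \frac{1}{3} + f_3(x^3) - f_1(x^1)$, $k_3(x) = \frac{1}{3} + f_1(x^1) - f_2(x^2)$. -/

import Mathlib

/-- If a differentiable function on `ℝ³` has vanishing derivative in direction
`Pi.single i 1` everywhere, then it does not depend on the `i`-th coordinate. -/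
lemma stmt_6_indep (k : (Fin 3 → ℝ) → ℝ) (hk : Differentiable ℝ k) (i : Fin 3)
    (hd : ∀ x, fderiv ℝ k x (Pi.single i 1) = 0) (x : Fin 3 → ℝ) (s : ℝ) :
    k (Function.update x i s) = k x := by
  have hline : ∀ t : ℝ, Function.update x i t
      = x + (t - x i) • (Pi.single i 1 : Fin 3 → ℝ) := by
    intro t; funext j
    by_cases hj : j = i
    · subst hj; simp
    · simp [Function.update_of_ne hj, Pi.single_eq_of_ne hj]
  have hg : ∀ t : ℝ, HasDerivAt (fun t => k (Function.update x i t)) 0 t := by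
    intro t
    have hL : HasDerivAt (fun t : ℝ => x + (t - x i) • (Pi.single i 1 : Fin 3 → ℝ))
        ((Pi.single i 1 : Fin 3 → ℝ)) t := by
      have := ((hasDerivAt_id t).sub_const (x i)).smul_const
        ((Pi.single i 1 : Fin 3 → ℝ))
      simpa using this.const_add x
    have hc := (hk (x + (t - x i) • (Pi.single i 1 : Fin 3 → ℝ))).hasFDerivAt.comp_hasDerivAt t hL
    have h0 : HasDerivAt (fun t => k (Function.update x i t))
        (fderiv ℝ k (x + (t - x i) • (Pi.single i 1 : Fin 3 → ℝ)) (Pi.single i 1)) t := by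
      simp only [hline]
      exact hc
    rw [← hline t] at h0
    simpa [hd] using h0
  have hconst : ∀ a b : ℝ, k (Function.update x i a) = k (Function.update x i b) :=
    is_const_of_deriv_eq_zero (fun t => (hg t).differentiableAt)
      (fun t => (hg t).deriv)
  calc k (Function.update x i s) = k (Function.update x i (x i)) := hconst s (x i)
    _ = k x := by rw [Function.update_eq_self]

theorem stmt_6 (k₁ k₂ k₃ : (Fin 3 → ℝ) → ℝ)
    (h₁ : Differentiable ℝ k₁) (h₂ : Differentiable ℝ k₂) (h₃ : Differentiable ℝ k₃)
    (hsum : ∀ x, k₁ x + k₂ x + k₃ x = 1)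
    (hd₁ : ∀ x, fderiv ℝ k₁ x (Pi.single 0 1) = 0)
    (hd₂ : ∀ x, fderiv ℝ k₂ x (Pi.single 1 1) = 0)
    (hd₃ : ∀ x, fderiv ℝ k₃ x (Pi.single 2 1) = 0) :
    ∃ f₁ f₂ f₃ : ℝ → ℝ, ∀ x : Fin 3 → ℝ,
      k₁ x = 1 / 3 + f₂ (x 1) - f₃ (x 2) ∧
      k₂ x = 1 / 3 + f₃ (x 2) - f₁ (x 0) ∧
      k₃ x = 1 / 3 + f₁ (x 0) - f₂ (x 1) := by
  -- reformulate independence: k agrees on points agreeing off coordinate i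
  have indep' : ∀ (k : (Fin 3 → ℝ) → ℝ), Differentiable ℝ k → ∀ (i : Fin 3),
      (∀ x, fderiv ℝ k x (Pi.single i 1) = 0) →
      ∀ x y : Fin 3 → ℝ, (∀ j, j ≠ i → x j = y j) → k x = k y := by
    intro k hk i hd x y hxy
    have hy : y = Function.update x i (y i) := by
      funext j
      by_cases hj : j = i
      · subst hj; simp
      · rw [Function.update_of_ne hj]; exact (hxy j hj).symm
    rw [hy, stmt_6_indep k hk i hd]
  refine ⟨fun u => 1 / 3 - k₂ ![u, 0, 0], fun s => k₁ ![0, s, 0] - 1 / 3,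
    fun t => k₁ ![0, 0, 0] - k₁ ![0, 0, t], fun x => ?_⟩
  have hx : x = ![x 0, x 1, x 2] := by
    funext j; fin_cases j <;> rfl
  -- independence facts
  have K1 : ∀ a b c : ℝ, k₁ ![a, b, c] = k₁ ![0, b, c] := fun a b c =>
    indep' k₁ h₁ 0 hd₁ _ _ (by intro j hj; fin_cases j <;> first | rfl | exact absurd rfl hj)
  have K2 : ∀ a b c : ℝ, k₂ ![a, b, c] = k₂ ![a, 0, c] := fun a b c =>
    indep' k₂ h₂ 1 hd₂ _ _ (by intro j hj; fin_cases j <;> first | rfl | exact absurd rfl hj)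
  have K3 : ∀ a b c : ℝ, k₃ ![a, b, c] = k₃ ![a, b, 0] := fun a b c =>
    indep' k₃ h₃ 2 hd₃ _ _ (by intro j hj; fin_cases j <;> first | rfl | exact absurd rfl hj)
  set a := x 0; set b := x 1; set c := x 2
  -- collect sum facts at useful points
  have S1 := hsum ![a, b, c]
  have S2 := hsum ![0, b, 0]
  have S3 := hsum ![0, 0, c]
  have S4 := hsum ![0, 0, 0]
  have S5 := hsum ![0, b, c]
  have S6 := hsum ![a, 0, c]
  have S7 := hsum ![a, b, 0]
  have S8 := hsum ![a, 0, 0]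
  have E1 := K1 a b c
  have E2 := K2 a b c
  have E3 := K3 a b c
  have E4 := K2 0 b c
  have E5 := K3 0 b c
  have E6 := K1 a 0 c
  have E7 := K3 a 0 c
  have E8 := K1 a b 0
  have E9 := K2 a b 0
  have E10 := K1 a 0 0
  have E11 := K2 0 b 0
  have E12 := K3 0 0 c
  have E13 := K3 a 0 0
  rw [hx]
  simp only [Matrix.cons_val_zero, Matrix.cons_val_one, Matrix.head_cons,
    Matrix.cons_val_two, Matrix.tail_cons]
  refine ⟨by linarith, by linarith, by linarith⟩
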